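/- Let n ≥ 3, 0 < μ < L, Q = L/μ, d ≥ 3, and suppose ((√Q − 1)/√Q)^n (n − 1) > 1. Then for any initial point x_0 ∈ ℝ^d there exist quadratic functions f_1, …, f_n : ℝ^d → ℝ, each L-smooth and μ-strongly convex, all minimized at a common point x* (so the interpolation condition holds, and f = (1/n)Σ f_i is also L-smooth and μ-strongly convex with minimizer x*), such that the ASG method run with α = 1/L, β = (√Q − 1)/(√Q + 1) and cyclically sampled mini-batch gradients g_k = ∇f_{i_k}(y_k), where i_k = 1 + (k mod n) (so the same term is never sampled twice consecutively and each term is sampled with frequency 1/n), satisfies ‖y_k − x*‖ → ∞ as k → ∞. -/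

import Mathlib

open Matrix Filter
open scoped RealInnerProductSpace

noncomputable def vv (r : ℝ) (m : ℕ) : ℝ := (1 - (m:ℝ)) * r^m

noncomputable def phi (ρ r : ℝ) (n k : ℕ) : ℝ := ρ^(k/n) * vv r (k%n)

noncomputable def psi (β ρ r : ℝ) (n : ℕ) : ℕ → ℝ
  | 0 => 0
  | 1 => 1
  | (k+2) => (1+β) * phi ρ r n (k+1) - β * phi ρ r n k

lemma vv_zero (r : ℝ) : vv r 0 = 1 := by simp [vv]
lemma vv_one (r : ℝ) : vv r 1 = 0 := by simp [vv]
lemma vv_rec (r : ℝ) (m : ℕ) : vv r (m+2) = 2*r*vv r (m+1) - r^2 * vv r m := by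
  simp only [vv]; push_cast; ring

lemma phi_zero (ρ r : ℝ) (n : ℕ) (hn : 0 < n) : phi ρ r n 0 = 1 := by
  simp [phi, vv, Nat.div_eq_of_lt hn, Nat.mod_eq_of_lt hn]

lemma phi_one (ρ r : ℝ) (n : ℕ) (hn : 2 ≤ n) : phi ρ r n 1 = 0 := by
  simp [phi, vv, Nat.div_eq_of_lt (by omega : 1 < n), Nat.mod_eq_of_lt (by omega : 1 < n)]

lemma phi_succ (ρ r : ℝ) (n : ℕ) (hn : 0 < n) (hρ : ρ = (1 - (n:ℝ)) * r ^ n) (k : ℕ) :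
    phi ρ r n (k+1) = ρ^(k/n) * vv r (k%n + 1) := by
  obtain ⟨j, m, hm, rfl⟩ : ∃ j m, m < n ∧ k = n*j + m :=
    ⟨k/n, k%n, Nat.mod_lt _ hn, (Nat.div_add_mod k n).symm⟩
  have hdj : (n*j + m)/n = j := by rw [Nat.mul_add_div hn, Nat.div_eq_of_lt hm, add_zero]
  have hmj : (n*j + m)%n = m := by rw [Nat.mul_add_mod, Nat.mod_eq_of_lt hm]
  simp only [phi]
  by_cases h : m + 1 < n
  · have e1 : n*j + m + 1 = n*j + (m+1) := by omega
    rw [e1, Nat.mul_add_div hn, Nat.div_eq_of_lt h, Nat.mul_add_mod, Nat.mod_eq_of_lt h,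
      hdj, hmj, add_zero]
  · have h' : m + 1 = n := by omega
    have e1 : n*j + m + 1 = n*(j+1) := by subst h'; ring
    have hv : vv r n = ρ := by rw [hρ, ← h']; rfl
    rw [e1, Nat.mul_div_cancel_left _ hn, Nat.mul_mod_right, hdj, hmj, vv_zero, h', hv]
    ring

lemma phi_rec (ρ r β eμ : ℝ) (n : ℕ) (hn : 3 ≤ n)
    (hρ : ρ = (1 - (n:ℝ)) * r ^ n)
    (h1 : eμ * (1+β) = 2*r) (h2 : eμ * β = r^2) (k : ℕ) :
    phi ρ r n (k+2) = (if (k+2) % n = 1 then 0 else eμ) *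
      ((1+β) * phi ρ r n (k+1) - β * phi ρ r n k) := by
  have hn0 : 0 < n := by omega
  obtain ⟨j, m, hm, rfl⟩ : ∃ j m, m < n ∧ k = n*j + m :=
    ⟨k/n, k%n, Nat.mod_lt _ hn0, (Nat.div_add_mod k n).symm⟩
  have hdj : (n*j + m)/n = j := by rw [Nat.mul_add_div hn0, Nat.div_eq_of_lt hm, add_zero]
  have hmj : (n*j + m)%n = m := by rw [Nat.mul_add_mod, Nat.mod_eq_of_lt hm]
  have expand : ∀ A B : ℝ, eμ * ((1+β) * (ρ^j * A) - β * (ρ^j * B))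
      = ρ^j * ((eμ*(1+β)) * A - (eμ*β) * B) := by intro A B; ring
  rcases lt_trichotomy (m+2) n with h | h | h
  · have e2 : n*j + m + 2 = n*j + (m+2) := by omega
    have hd2 : (n*j + (m+2))/n = j := by rw [Nat.mul_add_div hn0, Nat.div_eq_of_lt h, add_zero]
    have hm2 : (n*j + (m+2))%n = m+2 := by rw [Nat.mul_add_mod, Nat.mod_eq_of_lt h]
    have e1 : n*j + m + 1 = n*j + (m+1) := by omega
    have hd1 : (n*j + (m+1))/n = j := by
      rw [Nat.mul_add_div hn0, Nat.div_eq_of_lt (by omega), add_zero]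
    have hm1 : (n*j + (m+1))%n = m+1 := by rw [Nat.mul_add_mod, Nat.mod_eq_of_lt (by omega)]
    rw [e2, if_neg (by rw [hm2]; omega)]
    simp only [phi]
    rw [hd2, hm2, e1, hd1, hm1, hdj, hmj, vv_rec, expand, h1, h2]
  · have e2 : n*j + m + 2 = n*(j+1) := by subst h; ring
    have e1 : n*j + m + 1 = n*j + (m+1) := by omega
    have hd1 : (n*j + (m+1))/n = j := by
      rw [Nat.mul_add_div hn0, Nat.div_eq_of_lt (by omega), add_zero]
    have hm1 : (n*j + (m+1))%n = m+1 := by rw [Nat.mul_add_mod, Nat.mod_eq_of_lt (by omega)]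
    have hv : vv r (m+2) = ρ := by rw [hρ, ← h]; rfl
    rw [e2, if_neg (by rw [Nat.mul_mod_right]; omega)]
    simp only [phi]
    rw [Nat.mul_div_cancel_left _ hn0, Nat.mul_mod_right, e1, hd1, hm1, hdj, hmj, vv_zero,
      expand, h1, h2, ← vv_rec, hv]
    ring
  · have h' : n = m + 1 := by omega
    have e2 : n*j + m + 2 = n*(j+1) + 1 := by subst h'; ring
    rw [e2, if_pos (by rw [Nat.mul_add_mod]; exact Nat.mod_eq_of_lt (by omega))]
    simp only [phi]
    rw [Nat.mul_add_div hn0, Nat.mul_add_mod, Nat.div_eq_of_lt (by omega : 1 < n),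
      Nat.mod_eq_of_lt (by omega : 1 < n), add_zero, vv_one]
    ring

lemma w_eq (β r : ℝ) (hbr : (1+β)*r = 2*β) (m : ℕ) :
    (1+β) * vv r (m+1) - β * vv r m = -(β*((m:ℝ)+1)) * r^m := by
  simp only [vv, pow_succ]; push_cast
  linear_combination (-(m:ℝ))*r^m * hbr

lemma psi_closed (ρ r β : ℝ) (n : ℕ) (hn : 0 < n) (hρ : ρ = (1 - (n:ℝ)) * r ^ n)
    (hbr : (1+β)*r = 2*β) (k : ℕ) :
    psi β ρ r n (k+2) = ρ^(k/n) * (-(β*(((k%n:ℕ):ℝ)+1)) * r^(k%n)) := by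
  show (1+β) * phi ρ r n (k+1) - β * phi ρ r n k = _
  rw [phi_succ ρ r n hn hρ k]
  simp only [phi]
  rw [← w_eq β r hbr]
  ring

lemma quad_gradient {d : ℕ} (T : EuclideanSpace ℝ (Fin d) →ₗ[ℝ] EuclideanSpace ℝ (Fin d))
    (hT : ∀ u w, ⟪T u, w⟫ = ⟪u, T w⟫) (b : EuclideanSpace ℝ (Fin d)) (c : ℝ)
    (p : EuclideanSpace ℝ (Fin d)) :
    gradient (fun v => (1/2 : ℝ) * ⟪v, T v⟫ - ⟪b, v⟫ + c) p = T p - b := by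
  have hTc : HasFDerivAt (fun v => T v) (LinearMap.toContinuousLinearMap T) p :=
    (LinearMap.toContinuousLinearMap T).hasFDerivAt
  have h1 := (hasFDerivAt_id p).inner ℝ hTc
  have h2 : HasFDerivAt (fun v : EuclideanSpace ℝ (Fin d) => ⟪b, v⟫) (innerSL ℝ b) p :=
    (innerSL ℝ b).hasFDerivAt
  have h3 := ((h1.const_mul (1/2 : ℝ)).sub h2).add_const c
  have h4 : HasGradientAt (fun v => (1/2 : ℝ) * ⟪v, T v⟫ - ⟪b, v⟫ + c) (T p - b) p := by
    rw [hasGradientAt_iff_hasFDerivAt]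
    refine h3.congr_fderiv (Eq.symm ?_)
    ext w
    simp only [InnerProductSpace.toDual_apply_apply, ContinuousLinearMap.coe_smul',
      Pi.smul_apply, ContinuousLinearMap.coe_sub', Pi.sub_apply,
      ContinuousLinearMap.comp_apply, ContinuousLinearMap.prod_apply,
      ContinuousLinearMap.coe_id', id_eq, fderivInnerCLM_apply,
      LinearMap.coe_toContinuousLinearMap', innerSL_apply_apply, smul_eq_mul,
      inner_sub_left]
    rw [real_inner_comm w (T p), ← hT p w, real_inner_comm (T p) w]
    ring
  exact h4.gradient

/-- (Impossibility result.)  For `n ≥ 3`, `d ≥ 3`, `0 < μ < L`,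
`Q = L/μ`, and `((√Q−1)/√Q)^n (n−1) > 1`, for every initial point `x₀` there exist
quadratic functions `f₁, …, f_n`, each `L`-smooth and `μ`-strongly convex (encoded by
symmetric Hessians with spectrum in `[μ, L]`), all minimized at a common point `x*`
(interpolation), such that Nesterov's method with `α = 1/L`,
`β = (√Q−1)/(√Q+1)` and cyclically sampled gradients `g_k = ∇f_{i_k}(y_k)`,
`i_k ≡ k (mod n)`, satisfies `‖y_k − x*‖ → ∞`. -/
theorem stmt3 (d n : ℕ) (hd : 3 ≤ d) (hn : 3 ≤ n)
    (μ L : ℝ) (hμ : 0 < μ) (hμL : μ < L)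
    (Q : ℝ) (hQ : Q = L / μ)
    (hdiv : 1 < ((Real.sqrt Q - 1) / Real.sqrt Q) ^ n * ((n : ℝ) - 1))
    (α β : ℝ) (hα : α = 1 / L) (hβ : β = (Real.sqrt Q - 1) / (Real.sqrt Q + 1))
    (x0 : EuclideanSpace ℝ (Fin d)) :
    ∃ (H : Fin n → Matrix (Fin d) (Fin d) ℝ) (b : Fin n → EuclideanSpace ℝ (Fin d))
      (c : Fin n → ℝ) (f : Fin n → EuclideanSpace ℝ (Fin d) → ℝ)
      (xstar : EuclideanSpace ℝ (Fin d)),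
      (∀ i, (H i).IsSymm) ∧
      (∀ i, spectrum ℝ (H i) ⊆ Set.Icc μ L) ∧
      (∀ i v, f i v = (1 / 2) * ⟪v, Matrix.toEuclideanLin (H i) v⟫ - ⟪b i, v⟫ + c i) ∧
      (∀ i v, f i xstar ≤ f i v) ∧
      ∀ x y : ℕ → EuclideanSpace ℝ (Fin d),
        x 0 = x0 →
        y 1 = x 0 →
        (∀ k, y (k + 2) = x (k + 1) + β • (x (k + 1) - x k)) →
        (∀ k, x (k + 1) = y (k + 1) -
          α • gradient (f ⟨(k + 1) % n, Nat.mod_lt _ (by omega)⟩) (y (k + 1))) →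
        Tendsto (fun k => ‖y k - xstar‖) atTop atTop := by
  -- basic scalar facts
  have hL0 : (0:ℝ) < L := hμ.trans hμL
  have hQpos : 0 < Q := by rw [hQ]; exact div_pos hL0 hμ
  have hQ1 : 1 < Q := by rw [hQ]; exact (one_lt_div hμ).2 hμL
  set s : ℝ := Real.sqrt Q with hs
  have hs1 : 1 < s := by
    have h := Real.sqrt_lt_sqrt (by norm_num) hQ1
    simpa using h
  have hs0 : 0 < s := lt_trans one_pos hs1
  have hsne : s ≠ 0 := ne_of_gt hs0
  have hspne : s + 1 ≠ 0 := by positivity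
  have hsq : s^2 = Q := Real.sq_sqrt hQpos.le
  obtain ⟨r, hrdef⟩ : ∃ r : ℝ, r = (s-1)/s := ⟨_, rfl⟩
  have hr0 : 0 < r := hrdef ▸ div_pos (by linarith) hs0
  have hr1 : r < 1 := hrdef ▸ (div_lt_one hs0).2 (by linarith)
  have hβ0 : 0 < β := by rw [hβ]; exact div_pos (by linarith) (by linarith)
  obtain ⟨ρ, hρdef⟩ : ∃ p : ℝ, p = (1 - (n:ℝ)) * r^n := ⟨_, rfl⟩
  have hn3 : (3:ℝ) ≤ (n:ℝ) := by exact_mod_cast hn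
  have hdivr : 1 < r^n * ((n:ℝ) - 1) := by rw [hrdef]; exact hdiv
  have hρabs : 1 < |ρ| := by
    have habs : |ρ| = ((n:ℝ)-1) * r^n := by
      rw [hρdef, abs_mul, abs_pow, abs_of_pos hr0, abs_of_nonpos (by linarith)]
      ring
    rw [habs]
    calc (1:ℝ) < r^n * ((n:ℝ)-1) := hdivr
    _ = ((n:ℝ)-1) * r^n := by ring
  have hμLs : μ / L = 1 / s^2 := by rw [hsq, hQ, one_div_div]
  have heμ1 : (1 - μ/L) * (1+β) = 2*r := by
    rw [hμLs, hβ, hrdef]; field_simp; ring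
  have heμ2 : (1 - μ/L) * β = r^2 := by
    rw [hμLs, hβ, hrdef]; field_simp; ring
  have hbr : (1+β)*r = 2*β := by
    rw [hβ, hrdef]; field_simp; ring
  -- the construction
  have hd0 : 0 < d := by omega
  set i0 : Fin d := ⟨0, by omega⟩ with hi0
  obtain ⟨e, he⟩ : ∃ e : EuclideanSpace ℝ (Fin d), e = EuclideanSpace.single i0 (1:ℝ) := ⟨_, rfl⟩
  obtain ⟨xstar, hxs⟩ : ∃ xs : EuclideanSpace ℝ (Fin d), xs = x0 - e := ⟨_, rfl⟩
  obtain ⟨g, hg⟩ : ∃ g : Fin n → Fin d → ℝ,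
      g = fun (i : Fin n) (j : Fin d) => if (i:ℕ) = 1 ∧ (j:ℕ) = 0 then L else μ := ⟨_, rfl⟩
  obtain ⟨Tl, hTl⟩ : ∃ T : Fin n → (EuclideanSpace ℝ (Fin d) →ₗ[ℝ] EuclideanSpace ℝ (Fin d)),
      T = fun i => Matrix.toEuclideanLin (Matrix.diagonal (g i)) := ⟨_, rfl⟩
  have Tapp : ∀ i (u : EuclideanSpace ℝ (Fin d)) j, (Tl i u) j = g i j * u j := by
    intro i u j
    rw [hTl]
    rw [Matrix.toEuclideanLin_apply]
    simp [Matrix.mulVec_diagonal]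
  have hsymm : ∀ i u w, ⟪Tl i u, w⟫ = ⟪u, Tl i w⟫ := by
    intro i u w
    simp only [PiLp.inner_apply, RCLike.inner_apply, conj_trivial, Tapp]
    exact Finset.sum_congr rfl fun j _ => by ring
  have hpos : ∀ i u, (0:ℝ) ≤ ⟪u, Tl i u⟫ := by
    intro i u
    simp only [PiLp.inner_apply, RCLike.inner_apply, conj_trivial, Tapp]
    apply Finset.sum_nonneg
    intro j _
    have hgj : 0 ≤ g i j := by
      simp only [hg]; split_ifs
      · exact hL0.le
      · exact hμ.le
    have huj : u j * (g i j * u j) = g i j * (u j)^2 := by ring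
    rw [show g i j * u j * u j = g i j * (u j)^2 by ring]
    exact mul_nonneg hgj (sq_nonneg _)
  have hTe : ∀ i : Fin n, Tl i e = (if (i:ℕ) = 1 then L else μ) • e := by
    intro i
    ext j
    rw [Tapp, PiLp.smul_apply, smul_eq_mul]
    by_cases hj : j = i0
    · subst hj
      simp only [hg, he, EuclideanSpace.single_apply, if_pos rfl]
      simp [hi0]
    · simp only [he, EuclideanSpace.single_apply, if_neg hj]
      ring
  refine ⟨fun i => Matrix.diagonal (g i), fun i => Tl i xstar,
    fun i => (1/2 : ℝ) * ⟪xstar, Tl i xstar⟫,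
    fun i v => (1/2 : ℝ) * ⟪v, Tl i v⟫ - ⟪Tl i xstar, v⟫ + (1/2 : ℝ) * ⟪xstar, Tl i xstar⟫,
    xstar, fun i => Matrix.isSymm_diagonal _, ?_, ?_, ?_, ?_⟩
  · -- spectrum
    intro i z hz
    rw [spectrum_diagonal] at hz
    obtain ⟨j, rfl⟩ := hz
    simp only [hg]
    split_ifs
    · exact ⟨hμL.le, le_refl L⟩
    · exact ⟨le_refl μ, hμL.le⟩
  · -- formula
    intro i v
    rw [hTl]
  · -- minimality
    intro i v
    have h1 : (1/2 : ℝ) * ⟪xstar, Tl i xstar⟫ - ⟪Tl i xstar, xstar⟫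
        + (1/2 : ℝ) * ⟪xstar, Tl i xstar⟫ = 0 := by
      rw [real_inner_comm (Tl i xstar) xstar]; ring
    have hA : ⟪v, Tl i xstar⟫ = ⟪Tl i xstar, v⟫ := real_inner_comm _ _
    have hB : ⟪xstar, Tl i v⟫ = ⟪Tl i xstar, v⟫ := (hsymm i xstar v).symm
    have h2 : (1/2 : ℝ) * ⟪v, Tl i v⟫ - ⟪Tl i xstar, v⟫ + (1/2 : ℝ) * ⟪xstar, Tl i xstar⟫
        = (1/2 : ℝ) * ⟪v - xstar, Tl i (v - xstar)⟫ := by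
      rw [map_sub, inner_sub_left, inner_sub_right, inner_sub_right, hA, hB]
      ring
    dsimp only
    rw [h1, h2]
    have := hpos i (v - xstar)
    linarith
  · -- dynamics
    intro x y hx0 hy1 hyrec hxrec
    have hgrad : ∀ (i : Fin n) p, gradient (fun v =>
        (1/2 : ℝ) * ⟪v, Tl i v⟫ - ⟪Tl i xstar, v⟫ + (1/2 : ℝ) * ⟪xstar, Tl i xstar⟫) p
        = Tl i p - Tl i xstar := by
      intro i p
      exact quad_gradient (Tl i) (hsymm i) (Tl i xstar) _ p
    have hcanc : ∀ t : ℝ, t - 1/L * (t * L) = 0 := by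
      intro t; field_simp; ring
    have hcanc2 : ∀ t : ℝ, t - 1/L * (t * μ) = (1 - μ/L) * t := by
      intro t; field_simp
    have key : ∀ k, x k = xstar + phi ρ r n k • e ∧
        y (k+1) = xstar + psi β ρ r n (k+1) • e := by
      intro k
      induction k with
      | zero =>
        constructor
        · rw [hx0, phi_zero ρ r n (by omega), one_smul, hxs, sub_add_cancel]
        · rw [hy1, hx0, show psi β ρ r n 1 = (1:ℝ) from rfl, one_smul, hxs, sub_add_cancel]
      | succ k ih =>
        obtain ⟨ihx, ihy⟩ := ih
        have hgv : ∀ (i : Fin n), (i:ℕ) = (k+1) % n →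
            Tl i (xstar + psi β ρ r n (k+1) • e) - Tl i xstar
            = (psi β ρ r n (k+1) * (if (k+1) % n = 1 then L else μ)) • e := by
          intro i hi
          rw [map_add, _root_.map_smul, add_sub_cancel_left, hTe i, smul_smul, hi]
        have hfac : phi ρ r n (k+1)
            = psi β ρ r n (k+1) - α * (psi β ρ r n (k+1) * (if (k+1) % n = 1 then L else μ)) := by
          rcases k with _ | k'
          · rw [show (0+1) % n = 1 from Nat.mod_eq_of_lt (by omega), if_pos rfl,
              phi_one ρ r n (by omega), hα, show psi β ρ r n 1 = (1:ℝ) from rfl, hcanc 1]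
          · have hrec := phi_rec ρ r β (1 - μ/L) n hn hρdef heμ1 heμ2 k'
            have hψ : psi β ρ r n (k'+2)
                = (1+β) * phi ρ r n (k'+1) - β * phi ρ r n k' := rfl
            by_cases hif : (k'+2) % n = 1
            · rw [if_pos hif] at hrec
              rw [show k'+1+1 = k'+2 from rfl, if_pos hif, hrec, hα, zero_mul, hcanc]
            · rw [if_neg hif] at hrec
              rw [show k'+1+1 = k'+2 from rfl, if_neg hif, hrec, hα, hcanc2, ← hψ]
        have hx' : x (k+1) = xstar + phi ρ r n (k+1) • e := by
          rw [hxrec k, hgrad, ihy, hgv _ rfl, hfac]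
          module
        refine ⟨hx', ?_⟩
        rw [hyrec k, hx', ihx,
          show psi β ρ r n (k+2) = (1+β) * phi ρ r n (k+1) - β * phi ρ r n k from rfl]
        module
    -- norms
    have hnorm : ∀ k, ‖y (k+2) - xstar‖ = |psi β ρ r n (k+2)| := by
      intro k
      rw [(key (k+1)).2, add_sub_cancel_left, norm_smul, Real.norm_eq_abs, he,
        EuclideanSpace.norm_single, norm_one, mul_one]
    have hbound : ∀ k, |ρ|^(k/n) * (β * r^n) ≤ |psi β ρ r n (k+2)| := by
      intro k
      rw [psi_closed ρ r β n (by omega) hρdef hbr k]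
      have hm : (k % n) < n := Nat.mod_lt _ (by omega)
      have hp1 : (0:ℝ) < β*(((k%n:ℕ):ℝ)+1) := by positivity
      have habs : |ρ^(k/n) * (-(β*(((k%n:ℕ):ℝ)+1)) * r^(k%n))|
          = |ρ|^(k/n) * (β*(((k%n:ℕ):ℝ)+1) * r^(k%n)) := by
        rw [abs_mul, abs_pow, abs_mul, abs_neg, abs_of_pos hp1, abs_of_pos (pow_pos hr0 _)]
      rw [habs]
      apply mul_le_mul_of_nonneg_left _ (pow_nonneg (abs_nonneg ρ) _)
      have h1 : r^n ≤ r^(k%n) := pow_le_pow_of_le_one hr0.le hr1.le hm.le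
      have h2 : (1:ℝ) ≤ ((k%n:ℕ):ℝ)+1 := by
        have := Nat.cast_nonneg (α := ℝ) (k%n)
        linarith
      calc β * r^n ≤ β * r^(k%n) := mul_le_mul_of_nonneg_left h1 hβ0.le
      _ = (β * 1) * r^(k%n) := by ring
      _ ≤ (β * (((k%n:ℕ):ℝ)+1)) * r^(k%n) := by
        apply mul_le_mul_of_nonneg_right _ (pow_nonneg hr0.le _)
        exact mul_le_mul_of_nonneg_left h2 hβ0.le
      _ = β * (((k%n:ℕ):ℝ)+1) * r^(k%n) := by ring
    have hδ : 0 < β * r^n := mul_pos hβ0 (pow_pos hr0 n)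
    have t1 : Tendsto (fun j : ℕ => |ρ|^j * (β*r^n)) atTop atTop :=
      (tendsto_pow_atTop_atTop_of_one_lt hρabs).atTop_mul_const hδ
    have t2 : Tendsto (fun k : ℕ => k / n) atTop atTop := by
      apply Filter.tendsto_atTop_atTop.2
      intro bb
      refine ⟨n*bb + n, fun a ha => ?_⟩
      rw [Nat.le_div_iff_mul_le (by omega : 0 < n)]
      calc bb * n = n * bb := Nat.mul_comm _ _
      _ ≤ a := le_trans (Nat.le_add_right _ n) ha
    have t3 : Tendsto (fun k : ℕ => |ρ|^((k-2)/n) * (β*r^n)) atTop atTop :=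
      (t1.comp t2).comp (tendsto_sub_atTop_nat 2)
    apply tendsto_atTop_mono' atTop _ t3
    filter_upwards [eventually_ge_atTop 2] with k hk
    obtain ⟨k', rfl⟩ : ∃ k', k = k' + 2 := ⟨k-2, by omega⟩
    rw [show k' + 2 - 2 = k' from rfl, hnorm k']
    exact hbound k'
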